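/- Safety via Ville's inequality (DTCBF case): Suppose h(x_k) ≤ B a.s. for all k, with B > 0, and E[h(x_{k+1}) | F_k] ≥ α h(x_k) for some α ∈ (0,1) and all k ≤ K, with x_0 deterministic and h(x_0) ≥ 0. Then P(∃ k ≤ K, h(x_k) < 0) ≤ 1 − α^K h(x_0)/B. -/

import Mathlib

open MeasureTheory Filter

/-- Safety via Ville's inequality, DTCBF case: if `h(x_k) ≤ B` a.s. and the DTCBF
expectation condition holds with `α ∈ (0,1)`, then
`P(∃ k ≤ K, h(x_k) < 0) ≤ 1 − α^K h(x_0)/B`. Here `Y k = h(x_k)`. -/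
theorem villes_safety_dtcbf
    {Ω : Type*} {m0 : MeasurableSpace Ω} {μ : Measure Ω} [IsProbabilityMeasure μ]
    (ℱ : Filtration ℕ m0) (Y : ℕ → Ω → ℝ)
    (hadp : Adapted ℱ Y) (hint : ∀ k, Integrable (Y k) μ)
    (y0 : ℝ) (hY0 : Y 0 = fun _ => y0) (hy0 : 0 ≤ y0)
    (B : ℝ) (hB : 0 < B) (hbd : ∀ k : ℕ, ∀ᵐ ω ∂μ, Y k ω ≤ B)
    (K : ℕ) (hK : 1 ≤ K)
    (α : ℝ) (hα : α ∈ Set.Ioo (0 : ℝ) 1)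
    (hcbf : ∀ k ≤ K, ∀ᵐ ω ∂μ, α * Y k ω ≤ (μ[Y (k + 1) | ℱ k]) ω) :
    (μ {ω | ∃ k ≤ K, Y k ω < 0}).toReal ≤ 1 - α ^ K * y0 / B := by
  obtain ⟨hα0, hα1⟩ := hα
  have hαne : α ≠ 0 := ne_of_gt hα0
  set f : ℕ → Ω → ℝ := fun k ω => (α ^ min k K)⁻¹ * Y (min k K) ω with hf
  have hfadp : Adapted ℱ f := by
    intro k
    exact ((hadp (min k K)).mono (ℱ.mono (min_le_left k K)) le_rfl).const_mul _
  have hfint : ∀ k, Integrable (f k) μ := fun k => (hint (min k K)).const_mul _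
  have hsub : Submartingale f ℱ μ := by
    refine submartingale_nat hfadp.stronglyAdapted hfint fun k => ?_
    rcases lt_or_ge k K with hk | hk
    · have h1 : min k K = k := min_eq_left hk.le
      have h2 : min (k+1) K = k + 1 := min_eq_left hk
      have hce : μ[f (k+1)|ℱ k] =ᵐ[μ] fun ω => (α ^ (k+1))⁻¹ * (μ[Y (k+1)|ℱ k]) ω := by
        have : f (k+1) = (α ^ (k+1))⁻¹ • Y (k+1) := by
          funext ω; simp [hf, h2, smul_eq_mul]
        rw [this]
        filter_upwards [condExp_smul (μ := μ) (m := ℱ k) ((α ^ (k+1))⁻¹) (Y (k+1))] with ω hω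
        simp [hω]
      filter_upwards [hce, hcbf k hk.le] with ω hω hcbfω
      rw [hω]
      have : (α ^ (k+1))⁻¹ * (α * Y k ω) ≤ (α ^ (k+1))⁻¹ * (μ[Y (k+1)|ℱ k]) ω :=
        mul_le_mul_of_nonneg_left hcbfω (by positivity)
      calc f k ω = (α ^ (k+1))⁻¹ * (α * Y k ω) := by
            simp only [hf, h1]; field_simp; ring
        _ ≤ _ := this
    · have h1 : min k K = K := min_eq_right hk
      have h2 : min (k+1) K = K := min_eq_right (hk.trans (Nat.le_succ k))
      have heq : f (k+1) = f k := by funext ω; simp [hf, h1, h2]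
      rw [heq]
      have hmeas : StronglyMeasurable[ℱ k] (f k) := by
        have := ((hadp K).mono (ℱ.mono hk) le_rfl).stronglyMeasurable
        simpa [hf, h1] using this.const_mul ((α ^ K)⁻¹)
      rw [condExp_of_stronglyMeasurable (ℱ.le k) hmeas (hfint k)]
  -- the stopping time
  set τ : Ω → ℕ := hittingBtwn Y (Set.Iio 0) 0 K with hτdef
  have hτ : IsStoppingTime ℱ (fun ω => (τ ω : WithTop ℕ)) := hadp.isStoppingTime_hittingBtwn measurableSet_Iio
  have hτle : ∀ ω, τ ω ≤ K := fun ω => hittingBtwn_le ω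
  -- lower bound on E[f_τ]
  have h0 : y0 ≤ ∫ ω, stoppedValue f (fun ω => (τ ω : WithTop ℕ)) ω ∂μ := by
    have := hsub.expected_stoppedValue_mono (isStoppingTime_const ℱ 0) hτ
      (fun ω => WithTop.coe_le_coe.2 (Nat.zero_le _)) (fun ω => WithTop.coe_le_coe.2 (hτle ω))
    have hs0 : stoppedValue f (fun _ => ((0:ℕ) : WithTop ℕ)) = fun _ => y0 := by
      funext ω
      simp [stoppedValue, hf, hY0]
    erw [hs0] at this
    simpa [integral_const] using this
  -- the bad set
  set A : Set Ω := {ω | ∃ k ≤ K, Y k ω < 0} with hA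
  have hAmeas : MeasurableSet A := by
    have : A = ⋃ k ∈ Finset.range (K+1), {ω | Y k ω < 0} := by
      ext ω; simp [hA, Nat.lt_succ_iff]
    rw [this]
    exact MeasurableSet.biUnion (Finset.range (K+1)).countable_toSet fun k _ =>
      measurableSet_lt ((hadp k).mono (ℱ.le k) le_rfl) measurable_const
  -- upper bound function
  set g : Ω → ℝ := fun ω => if ω ∈ A then 0 else B * (α ^ K)⁻¹ with hg
  have hgle : stoppedValue f (fun ω => (τ ω : WithTop ℕ)) ≤ᵐ[μ] g := by
    filter_upwards [ae_all_iff.2 hbd] with ω hbdω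
    by_cases hωA : ω ∈ A
    · have hmem : Y (τ ω) ω ∈ Set.Iio 0 := by
        apply stoppedValue_hittingBtwn_mem
        obtain ⟨k, hkK, hk⟩ := hωA
        exact ⟨k, ⟨Nat.zero_le _, hkK⟩, hk⟩
      have hmin : min (τ ω) K = τ ω := min_eq_left (hτle ω)
      have : stoppedValue f (fun ω => (τ ω : WithTop ℕ)) ω = (α ^ τ ω)⁻¹ * Y (τ ω) ω := by
        show (α ^ min (τ ω) K)⁻¹ * Y (min (τ ω) K) ω = _; simp [hmin]
      rw [this]
      simp only [hg, if_pos hωA]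
      have : Y (τ ω) ω < 0 := hmem
      nlinarith [inv_nonneg.2 (pow_nonneg hα0.le (τ ω))]
    · simp only [hg, if_neg hωA]
      have hmin : min (τ ω) K = τ ω := min_eq_left (hτle ω)
      have hsv : stoppedValue f (fun ω => (τ ω : WithTop ℕ)) ω = (α ^ τ ω)⁻¹ * Y (τ ω) ω := by
        show (α ^ min (τ ω) K)⁻¹ * Y (min (τ ω) K) ω = _; simp [hmin]
      rw [hsv]
      have hYnn : 0 ≤ Y (τ ω) ω := by
        by_contra h
        exact hωA ⟨τ ω, hτle ω, lt_of_not_ge h⟩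
      have hinv : (α ^ τ ω)⁻¹ ≤ (α ^ K)⁻¹ := by
        apply inv_anti₀ (by positivity)
        exact pow_le_pow_of_le_one hα0.le hα1.le (hτle ω)
      calc (α ^ τ ω)⁻¹ * Y (τ ω) ω ≤ (α ^ K)⁻¹ * B :=
            mul_le_mul hinv (hbdω (τ ω)) hYnn (by positivity)
        _ = B * (α ^ K)⁻¹ := mul_comm _ _
  have hgint : Integrable g μ := by
    have : g = Set.indicator Aᶜ (fun _ => B * (α ^ K)⁻¹) := by
      funext ω; by_cases h : ω ∈ A <;> simp [hg, h, Set.indicator]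
    rw [this]
    exact (integrable_const _).indicator hAmeas.compl
  have hint_le : ∫ ω, stoppedValue f (fun ω => (τ ω : WithTop ℕ)) ω ∂μ ≤ ∫ ω, g ω ∂μ :=
    integral_mono_ae (hsub.integrable_stoppedValue hτ (fun ω => WithTop.coe_le_coe.2 (hτle ω))) hgint hgle
  have hgval : ∫ ω, g ω ∂μ = B * (α ^ K)⁻¹ * (1 - (μ A).toReal) := by
    have : g = Set.indicator Aᶜ (fun _ => B * (α ^ K)⁻¹) := by
      funext ω; by_cases h : ω ∈ A <;> simp [hg, h, Set.indicator]
    rw [this, integral_indicator_const _ hAmeas.compl]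
    have hAc : (μ Aᶜ).toReal = 1 - (μ A).toReal := by
      rw [measure_compl hAmeas (measure_ne_top μ A), measure_univ,
        ENNReal.toReal_sub_of_le prob_le_one ENNReal.one_ne_top, ENNReal.toReal_one]
    rw [measureReal_def, hAc, smul_eq_mul]; ring
  have hkey : y0 ≤ B * (α ^ K)⁻¹ * (1 - (μ A).toReal) := by
    rw [← hgval]; exact h0.trans hint_le
  have hαK : (0:ℝ) < α ^ K := by positivity
  have h2 : α ^ K * y0 ≤ B * (1 - (μ A).toReal) := by
    have h := mul_le_mul_of_nonneg_left hkey hαK.le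
    calc α ^ K * y0 ≤ α ^ K * (B * (α ^ K)⁻¹ * (1 - (μ A).toReal)) := h
      _ = B * (1 - (μ A).toReal) := by field_simp
  have h3 : α ^ K * y0 / B ≤ 1 - (μ A).toReal := by
    rw [div_le_iff₀ hB]; nlinarith
  linarith
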